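/- Let G be a finite insoluble group with R(G) = 1. Then |E(Γ_S(G))| ≥ (|G|/2)·(k(G) - 3) + 1, where k(G) is the number of conjugacy classes of G; equality never holds (since G is insoluble, hence not abelian). -/

import Mathlib

open Subgroup

/-- The soluble radical of a group: the join of all soluble normal subgroups. -/
def solRadical (G : Type*) [Group G] : Subgroup G :=
  sSup {N : Subgroup G | N.Normal ∧ IsSolvable N}

instance solRadical_normal {G : Type*} [Group G] : (solRadical G).Normal := by
  constructor
  intro n hn g
  have h : solRadical G ≤ (solRadical G).comap (MulAut.conj g).toMonoidHom := by
    apply sSup_le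
    rintro N ⟨hnorm, hsol⟩ x hx
    simp only [Subgroup.mem_comap, MulEquiv.coe_toMonoidHom, MulAut.conj_apply]
    exact le_sSup (s := {N : Subgroup G | N.Normal ∧ IsSolvable N}) ⟨hnorm, hsol⟩
      (hnorm.conj_mem x hx g)
  simpa using h hn

/-- The solubilizer of an element `x`: all `g` such that `⟨x, g⟩` is soluble. -/
def solubilizer {G : Type*} [Group G] (x : G) : Set G :=
  {g : G | IsSolvable (Subgroup.closure ({x, g} : Set G))}

/-- The solubility graph: vertices are elements outside the soluble radical,
two distinct vertices adjacent iff they generate a soluble subgroup. -/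
def solGraph (G : Type*) [Group G] : SimpleGraph {x : G // x ∉ solRadical G} where
  Adj a b := a ≠ b ∧ IsSolvable (Subgroup.closure ({a.1, b.1} : Set G))
  symm := ⟨(by rintro a b ⟨hne, hs⟩; exact ⟨hne.symm, by rwa [Set.pair_comm]⟩)⟩
  loopless := ⟨(by rintro a ⟨h, -⟩; exact h rfl)⟩

noncomputable instance {G : Type*} [Group G] [Fintype G] :
    Fintype {x : G // x ∉ solRadical G} := Fintype.ofFinite _

/-- The degree of `x` in the solubility graph (as the number of its neighbours). -/
noncomputable def solDeg (G : Type*) [Group G] (x : G) : ℕ :=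
  {g : G | g ∉ solRadical G ∧ g ≠ x ∧
    IsSolvable (Subgroup.closure ({x, g} : Set G))}.ncard

/-- The number of edges of the solubility graph. -/
noncomputable def solEdges (G : Type*) [Group G] : ℕ :=
  (solGraph G).edgeSet.ncard

/-- The solubility degree of a finite group. -/
noncomputable def Ps (G : Type*) [Group G] : ℚ :=
  (Nat.card {p : G × G // IsSolvable (Subgroup.closure ({p.1, p.2} : Set G))} : ℚ) /
    (Nat.card G : ℚ) ^ 2



open Pointwise

lemma solOfLe {G : Type*} [Group G] {H K : Subgroup G} (h : H ≤ K) (hK : Group.IsSolvable K) :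
    Group.IsSolvable H :=
  solvable_of_solvable_injective (Subgroup.inclusion_injective h)

lemma solMap {G H : Type*} [Group G] [Group H] (f : G →* H) (hf : Function.Injective f)
    (c : Subgroup G) (hc : Group.IsSolvable c) : Group.IsSolvable (c.map f) :=
  solvable_of_surjective (f := (Subgroup.equivMapOfInjective c f hf).toMonoidHom)
    (Subgroup.equivMapOfInjective c f hf).surjective

lemma solClosurePair {G : Type*} [Group G] {x y : G} {K : Subgroup G} (hK : Group.IsSolvable K)
    (hx : x ∈ K) (hy : y ∈ K) : Group.IsSolvable (closure ({x, y} : Set G)) :=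
  solOfLe (closure_le K |>.mpr (by rintro z (rfl | rfl) <;> assumption)) hK

lemma solClosureComm {G : Type*} [Group G] {x y : G} (h : Commute x y) :
    Group.IsSolvable (closure ({x, y} : Set G)) := by
  letI : CommGroup (closure ({x, y} : Set G)) := by
    apply Subgroup.closureCommGroupOfComm
    rintro a (rfl | rfl) b (rfl | rfl)
    · rfl
    · exact h
    · exact h.symm
    · rfl
  exact inferInstance

lemma solPGroup {p : ℕ} [Fact p.Prime] {G : Type*} [Group G] [Finite G]
    (h : IsPGroup p G) : Group.IsSolvable G :=
  by haveI := h.isNilpotent; infer_instance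

theorem exists_noncomm_sol_pair : ∀ (n : ℕ) (G : Type _) [Group G] [Finite G],
    Nat.card G = n → ¬ Group.IsSolvable G →
    ∃ x y : G, ¬ Commute x y ∧ Group.IsSolvable (closure ({x, y} : Set G)) := by
  intro n
  induction n using Nat.strong_induction_on with
  | _ n IH =>
  intro G _ _ hcard hG
  -- choose a prime dividing the order
  have hne : Nat.card G ≠ 1 := by
    intro h1
    haveI : Subsingleton G := (Nat.card_eq_one_iff_unique.mp h1).1
    exact hG inferInstance
  obtain ⟨p, hp, hpdvd⟩ := Nat.exists_prime_and_dvd hne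
  haveI : Fact p.Prime := ⟨hp⟩
  obtain ⟨P⟩ : Nonempty (Sylow p G) := Sylow.nonempty
  by_cases hnc : Subgroup.normalizer ((P : Subgroup G) : Set G) ≤ Subgroup.centralizer (P : Set G)
  · -- Burnside: normal p-complement
    set K := (MonoidHom.transferSylow P hnc).ker with hK
    have hcompl := MonoidHom.ker_transferSylow_isComplement' P hnc
    have hmul : Nat.card K * Nat.card (P : Subgroup G) = Nat.card G :=
      hcompl.card_mul_card
    have hpP : p ∣ Nat.card (P : Subgroup G) := by
      rcases (Nat.Prime.dvd_mul hp).mp (hmul ▸ hpdvd) with h | h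
      · exact absurd h (MonoidHom.not_dvd_card_ker_transferSylow P hnc)
      · exact h
    have hPsol : Group.IsSolvable (P : Subgroup G) := solPGroup P.isPGroup'
    have hquot : Group.IsSolvable (G ⧸ K) := by
      haveI := hPsol
      exact solvable_of_solvable_injective
        (f := QuotientGroup.kerLift (MonoidHom.transferSylow P hnc))
        (QuotientGroup.kerLift_injective _)
    have hKins : ¬ Group.IsSolvable K := by
      intro hKsol
      exact hG (solvable_of_ker_le_range K.subtype (QuotientGroup.mk' K)
        (by rw [QuotientGroup.ker_mk', Subgroup.range_subtype]))
    have hKlt : Nat.card K < n := by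
      rw [← hcard, ← hmul]
      have h1 : 0 < Nat.card K := Nat.card_pos
      have h2 : 1 < Nat.card (P : Subgroup G) := lt_of_lt_of_le hp.one_lt (Nat.le_of_dvd Nat.card_pos hpP)
      calc Nat.card K = Nat.card K * 1 := (mul_one _).symm
        _ < Nat.card K * Nat.card (P : Subgroup G) := (Nat.mul_lt_mul_left h1).mpr h2
    obtain ⟨x, y, hxy, hsol⟩ := IH _ hKlt K rfl hKins
    refine ⟨(x : G), (y : G), ?_, ?_⟩
    · intro h
      exact hxy (Subtype.ext h)
    · have : (closure ({x, y} : Set K)).map K.subtype = closure ({(x : G), (y : G)} : Set G) := by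
        rw [MonoidHom.map_closure]
        congr 1
        simp [Set.image_pair]
      rw [← this]
      exact solMap _ (Subgroup.subtype_injective _) _ hsol
  · -- some element of the normalizer does not centralize P
    rw [SetLike.not_le_iff_exists] at hnc
    obtain ⟨y, hyN, hyC⟩ := hnc
    rw [Subgroup.mem_centralizer_iff] at hyC
    push_neg at hyC
    obtain ⟨x, hxP, hxy⟩ := hyC
    set W := Subgroup.normalizer ((P : Subgroup G) : Set G) with hW
    have hxW : x ∈ W := Subgroup.le_normalizer hxP
    set P₀ : Subgroup W := (P : Subgroup G).subgroupOf W with hP₀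
    haveI : P₀.Normal := Subgroup.normal_in_normalizer
    set y₀ : W := ⟨y, hyN⟩ with hy₀
    set S₀ : Subgroup W := P₀ ⊔ Subgroup.zpowers y₀ with hS₀
    have hx₀P : (⟨x, hxW⟩ : W) ∈ P₀ := hxP
    have hxS : (⟨x, hxW⟩ : W) ∈ S₀ := Subgroup.mem_sup_left hx₀P
    have hyS : y₀ ∈ S₀ := Subgroup.mem_sup_right (Subgroup.mem_zpowers y₀)
    set N : Subgroup S₀ := P₀.subgroupOf S₀ with hN
    haveI : N.Normal := Subgroup.normal_subgroupOf
    -- N is solvable (p-group)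
    have hNsol : Group.IsSolvable N := by
      haveI : Group.IsSolvable (P : Subgroup G) := solPGroup P.isPGroup'
      refine solvable_of_solvable_injective
        (f := ({ toFun := fun a => (⟨((a.1 : W) : G), a.2⟩ : (P : Subgroup G)),
                 map_one' := rfl, map_mul' := fun a b => rfl } : N →* (P : Subgroup G))) ?_
      intro a b h
      have h' := congrArg Subtype.val h
      exact Subtype.ext (Subtype.ext (Subtype.ext h'))
    -- quotient is commutative
    have hQcomm : ∀ a b : S₀ ⧸ N, a * b = b * a := by
      have key : ∀ q : S₀ ⧸ N, q ∈ Subgroup.zpowers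
          (QuotientGroup.mk (⟨y₀, hyS⟩ : S₀)) := by
        intro q
        obtain ⟨s, rfl⟩ := QuotientGroup.mk_surjective q
        have hs : (s : W) ∈ (↑P₀ : Set W) * (↑(Subgroup.zpowers y₀) : Set W) := by
          rw [← Subgroup.normal_mul]; exact s.2
        rw [Set.mem_mul] at hs
        obtain ⟨a, ha, b, hb, hab⟩ := hs
        have haS : a ∈ S₀ := Subgroup.mem_sup_left ha
        have hbS : b ∈ S₀ := Subgroup.mem_sup_right hb
        obtain ⟨k, hk⟩ := hb
        have : s = (⟨a, haS⟩ : S₀) * ⟨b, hbS⟩ := by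
          apply Subtype.ext; exact hab.symm
        rw [this]
        rw [QuotientGroup.mk_mul]
        have h1 : (QuotientGroup.mk (⟨a, haS⟩ : S₀) : S₀ ⧸ N) = 1 := by
          rw [QuotientGroup.eq_one_iff]
          exact ha
        rw [h1, one_mul]
        refine ⟨k, ?_⟩
        have hb' : (⟨y₀, hyS⟩ : S₀) ^ k = ⟨b, hbS⟩ := by
          apply Subtype.ext
          push_cast
          exact hk
        rw [← hb']
        exact (QuotientGroup.mk_zpow _ _ _).symm
      intro a b
      obtain ⟨m, hm⟩ := key a
      obtain ⟨k, hk⟩ := key b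
      rw [← hm, ← hk]
      exact (Commute.zpow_zpow (Commute.refl _) m k)
    have hQsol : Group.IsSolvable (S₀ ⧸ N) := isSolvable_of_comm hQcomm
    have hS₀sol : Group.IsSolvable S₀ :=
      solvable_of_ker_le_range N.subtype (QuotientGroup.mk' N)
        (by rw [QuotientGroup.ker_mk', Subgroup.range_subtype])
    -- conclude
    refine ⟨x, y, ?_, ?_⟩
    · intro h; exact hxy h
    · refine solClosurePair (K := S₀.map W.subtype) (solMap _ (Subgroup.subtype_injective _) _ hS₀sol) ?_ ?_
      · exact ⟨⟨x, hxW⟩, hxS, rfl⟩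
      · exact ⟨y₀, hyS, rfl⟩

theorem stmt13 {G : Type*} [Group G] [Fintype G] (hG : ¬ IsSolvable G)
    (hR : solRadical G = ⊥) :
    (solEdges G : ℚ) >
      (Nat.card G : ℚ) / 2 * ((Nat.card (ConjClasses G) : ℚ) - 3) + 1 := by
  classical
  set n := Nat.card G with hn
  set k := Nat.card (ConjClasses G) with hk
  have hnotbot : ∀ x : G, x ∉ solRadical G ↔ x ≠ 1 := by
    intro x; rw [hR, Subgroup.mem_bot]
  set V := {x : G // x ∉ solRadical G}
  set F : Finset (G × G) :=
    Finset.univ.filter (fun p => IsSolvable (closure ({p.1, p.2} : Set G))) with hF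
  -- commuting pairs
  set C : Finset (G × G) := Finset.univ.filter (fun p => Commute p.1 p.2) with hC
  have hCcard : C.card = k * n := by
    rw [hk, hn, ← card_comm_eq_card_conjClasses_mul_card, Nat.card_eq_fintype_card,
      Fintype.card_subtype]
  have hCF : C ⊂ F := by
    obtain ⟨x, y, hxy, hsol⟩ := exists_noncomm_sol_pair (Nat.card G) G rfl hG
    refine (Finset.ssubset_iff_of_subset ?_).mpr ⟨(x, y), ?_, ?_⟩
    · intro p hp
      rw [hC, Finset.mem_filter] at hp
      rw [hF, Finset.mem_filter]
      exact ⟨Finset.mem_univ _, solClosureComm hp.2⟩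
    · rw [hF, Finset.mem_filter]; exact ⟨Finset.mem_univ _, hsol⟩
    · rw [hC, Finset.mem_filter]; push_neg; intro _; exact hxy
  have hlow : k * n + 1 ≤ F.card := by
    have := Finset.card_lt_card hCF
    omega
  -- split F
  have h0 := Finset.card_filter_add_card_filter_not
    (s := F) (p := fun p : G × G => p.1 = p.2)
  have hd : (F.filter fun p : G × G => p.1 = p.2).card = n := by
    rw [hn, Nat.card_eq_fintype_card, ← Finset.card_univ]
    apply Finset.card_bij (fun p _ => p.1)
    · intros; exact Finset.mem_univ _
    · intro p hp q hq h
      rw [Finset.mem_filter, Finset.mem_filter] at hp hq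
      exact Prod.ext h (by rw [← hp.2, ← hq.2, h])
    · intro x _
      refine ⟨(x, x), ?_, rfl⟩
      simp only [Finset.mem_filter, hF, Finset.mem_univ, true_and]
      exact ⟨solClosureComm (Commute.refl x), trivial⟩
  set F' := F.filter (fun p : G × G => ¬ p.1 = p.2) with hF'
  have h1 := Finset.card_filter_add_card_filter_not
    (s := F') (p := fun p : G × G => p.1 = 1)
  have hone : 1 ≤ n := by rw [hn]; exact Nat.one_le_iff_ne_zero.mpr Nat.card_pos.ne'
  have ha : (F'.filter fun p : G × G => p.1 = 1).card = n - 1 := by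
    rw [hn, Nat.card_eq_fintype_card]
    have : (Finset.univ.filter fun x : G => x ≠ 1).card = Fintype.card G - 1 := by
      rw [Finset.filter_ne', Finset.card_erase_of_mem (Finset.mem_univ _), Finset.card_univ]
    rw [← this]
    apply Finset.card_bij (fun p _ => p.2)
    · intro p hp
      simp only [hF', hF, Finset.mem_filter, Finset.mem_univ, true_and] at hp
      simp only [Finset.mem_filter, Finset.mem_univ, true_and]
      intro h2; exact hp.1.2 (hp.2.trans h2.symm)
    · intro p hp q hq h
      simp only [hF', Finset.mem_filter] at hp hq
      exact Prod.ext (hp.2.trans hq.2.symm) h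
    · intro y hy
      simp only [Finset.mem_filter, Finset.mem_univ, true_and] at hy
      refine ⟨(1, y), ?_, rfl⟩
      simp only [hF', hF, Finset.mem_filter, Finset.mem_univ, true_and]
      exact ⟨⟨solClosureComm (Commute.one_left y), fun h => hy h.symm⟩, trivial⟩
  set F'' := F'.filter (fun p : G × G => ¬ p.1 = 1) with hF''
  have h2 := Finset.card_filter_add_card_filter_not
    (s := F'') (p := fun p : G × G => p.2 = 1)
  have hb : (F''.filter fun p : G × G => p.2 = 1).card = n - 1 := by
    rw [hn, Nat.card_eq_fintype_card]
    have : (Finset.univ.filter fun x : G => x ≠ 1).card = Fintype.card G - 1 := by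
      rw [Finset.filter_ne', Finset.card_erase_of_mem (Finset.mem_univ _), Finset.card_univ]
    rw [← this]
    apply Finset.card_bij (fun p _ => p.1)
    · intro p hp
      simp only [hF'', hF', hF, Finset.mem_filter, Finset.mem_univ, true_and] at hp
      simp only [Finset.mem_filter, Finset.mem_univ, true_and]
      exact hp.1.2
    · intro p hp q hq h
      simp only [hF'', hF', Finset.mem_filter] at hp hq
      exact Prod.ext h (hp.2.trans hq.2.symm)
    · intro x hx
      simp only [Finset.mem_filter, Finset.mem_univ, true_and] at hx
      refine ⟨(x, 1), ?_, rfl⟩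
      simp only [hF'', hF', hF, Finset.mem_filter, Finset.mem_univ, true_and]
      exact ⟨⟨⟨solClosureComm (Commute.one_right x), hx⟩, hx⟩, trivial⟩
  -- the remaining part is twice the edge count
  have hc : (F''.filter fun p : G × G => ¬ p.2 = 1).card = 2 * solEdges G := by
    have hE : solEdges G = (solGraph G).edgeFinset.card := by
      rw [solEdges, SimpleGraph.edgeFinset, Set.ncard_eq_toFinset_card']
    rw [hE, SimpleGraph.two_mul_card_edgeFinset]
    refine (Finset.card_bij (fun (p : V × V) (_ : p ∈ Finset.univ.filter
      (fun q : V × V => (solGraph G).Adj q.1 q.2)) => ((p.1.1 : G), (p.2.1 : G))) ?_ ?_ ?_).symm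
    · intro p hp
      simp only [Finset.mem_filter, Finset.mem_univ, true_and] at hp ⊢
      obtain ⟨hne, hsol⟩ := hp
      simp only [hF'', hF', hF, Finset.mem_filter, Finset.mem_univ, true_and]
      refine ⟨⟨⟨hsol, fun h => hne (Subtype.ext h)⟩, ?_⟩, ?_⟩
      · exact (hnotbot _).mp p.1.2
      · exact (hnotbot _).mp p.2.2
    · intro p hp q hq h
      exact Prod.ext (Subtype.ext (congrArg Prod.fst h)) (Subtype.ext (congrArg Prod.snd h))
    · intro p hp
      simp only [hF'', hF', hF, Finset.mem_filter, Finset.mem_univ, true_and] at hp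
      obtain ⟨⟨⟨hsol, hne⟩, h1⟩, h2⟩ := hp
      refine ⟨(⟨p.1, (hnotbot _).mpr h1⟩, ⟨p.2, (hnotbot _).mpr h2⟩), ?_, rfl⟩
      simp only [Finset.mem_filter, Finset.mem_univ, true_and]
      exact ⟨fun h => hne (congrArg Subtype.val h), hsol⟩
  -- put it all together
  have hsum : F.card = n + ((n - 1) + ((n - 1) + 2 * solEdges G)) := by
    omega
  have hineq : k * n + 1 ≤ n + ((n - 1) + ((n - 1) + 2 * solEdges G)) := hsum ▸ hlow
  have hq : ((k : ℚ) * n + 1 : ℚ) ≤ (n : ℚ) + (((n : ℚ) - 1) + (((n : ℚ) - 1) + 2 * (solEdges G : ℚ))) := by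
    have := hineq
    push_cast [Nat.cast_sub hone] at *
    exact_mod_cast this
  have hn1 : (1 : ℚ) ≤ (n : ℚ) := by exact_mod_cast hone
  nlinarith [hq]
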